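/- For every L ≥ 2 and all widths n_0, n_1, …, n_{L−1} ≥ 1, the matrix-computation upper bound on the number of linear regions computed with γ^{ours} is at most the one computed with γ^{serra}: ‖B^{(γ^{ours})}_{n_{L−1}} M_{n_{L−2},n_{L−1}} ⋯ B^{(γ^{ours})}_{n_1} M_{n_0,n_1} e^{n_0}‖₁ ≤ ‖B^{(γ^{serra})}_{n_{L−1}} M_{n_{L−2},n_{L−1}} ⋯ B^{(γ^{serra})}_{n_1} M_{n_0,n_1} e^{n_0}‖₁, where ‖·‖₁ is the sum of entries. -/

import Mathlib

open scoped Classical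

noncomputable section

/-- Tail sum `Σ_{j ≥ J} v j` of a finitely supported histogram `v : ℕ →₀ ℕ`. -/
def tailSum (v : ℕ →₀ ℕ) (J : ℕ) : ℕ :=
  ∑ j ∈ v.support.filter (fun j => J ≤ j), v j

/-- Order relation on histograms: `v ≼ w` iff every tail sum of `v` is at most that of `w`. -/
def HistLE (v w : ℕ →₀ ℕ) : Prop :=
  ∀ J : ℕ, tailSum v J ≤ tailSum w J

/-- Downward move: `dm v 0 = 0` and `dm v (i+1) = v i`. -/
def dm (v : ℕ →₀ ℕ) : ℕ →₀ ℕ :=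
  Finsupp.embDomain ⟨Nat.succ, Nat.succ_injective⟩ v

/-- Clipping `cl_k`: keeps values below `k`, puts the tail sum at `k`, zero above `k`. -/
def clip (k : ℕ) (v : ℕ →₀ ℕ) : ℕ →₀ ℕ :=
  Finsupp.onFinset (Finset.range (k + 1))
    (fun i => if i < k then v i else if i = k then tailSum v k else 0)
    (by
      intro a ha
      simp only [Finset.mem_range]
      by_contra hc
      push_neg at hc
      have h1 : ¬ a < k := by omega
      have h2 : a ≠ k := by omega
      simp [h1, h2] at ha)

/-- The histogram `γ_{1,n'}`: value 1 at `n'`, value 2 at `⌈n'/2⌉, …, n'-1`,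
value `n' % 2` at `⌈n'/2⌉ - 1`, and 0 elsewhere. -/
def gammaOne (n' : ℕ) : ℕ →₀ ℕ :=
  Finsupp.onFinset (Finset.range (n' + 1))
    (fun i =>
      if i = n' then 1
      else if (n' + 1) / 2 ≤ i ∧ i < n' then 2
      else if i + 1 = (n' + 1) / 2 then n' % 2
      else 0)
    (by
      intro a ha
      simp only [Finset.mem_range]
      by_contra hc
      push_neg at hc
      have h1 : a ≠ n' := by omega
      have h2 : ¬ ((n' + 1) / 2 ≤ a ∧ a < n') := by omega
      have h3 : a + 1 ≠ (n' + 1) / 2 := by omega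
      simp [h1, h2, h3] at ha)

/-- Auxiliary column-major definition of `γ^{ours}`: `gammaOursAux n' n = γ^{ours}_{n,n'}`,
with the convention `γ_{n,n'} = γ_{n',n'}` for `n > n'` built in via the `min`s. -/
def gammaOursAux : ℕ → ℕ → (ℕ →₀ ℕ)
  | _, 0 => Finsupp.single 0 1
  | n', 1 => gammaOne n'
  | 0, _ + 2 => 0
  | 1, _ + 2 => gammaOne 1
  | n' + 1, nn + 2 =>
      gammaOursAux n' (min (nn + 1) n') + dm (gammaOursAux n' (min (nn + 2) n'))

/-- `γ^{ours}_{n,n'}`. -/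
def gammaOurs (n n' : ℕ) : ℕ →₀ ℕ := gammaOursAux n' n

/-- `γ^{serra}_{n,n'}`: `i ↦ binomial(n', i)` for `n' - n ≤ i ≤ n'`, and 0 otherwise. -/
def gammaSerra (n n' : ℕ) : ℕ →₀ ℕ :=
  Finsupp.onFinset (Finset.range (n' + 1))
    (fun i => if n' - n ≤ i ∧ i ≤ n' then Nat.choose n' i else 0)
    (by
      intro a ha
      simp only [Finset.mem_range]
      by_contra hc
      push_neg at hc
      have h1 : ¬ (n' - n ≤ a ∧ a ≤ n') := by omega
      exact ha (by rw [if_neg h1]))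

/-- `ℓ₁`-norm (sum of entries) of a histogram. -/
def l1 (v : ℕ →₀ ℕ) : ℕ := ∑ j ∈ v.support, v j

/-- The action of the matrix `B^{(γ)}_{n'}` on a histogram supported on `{0, …, n'}`:
`(B v)(i) = Σ_{j=0}^{n'} v(j) ⬝ (cl_j(γ_{j,n'}))(i)`. -/
def Bop (γ : ℕ → ℕ → (ℕ →₀ ℕ)) (n' : ℕ) (v : ℕ →₀ ℕ) : ℕ →₀ ℕ :=
  ∑ j ∈ Finset.range (n' + 1), v j • clip j (γ j n')

/-- `iterBound γ n i` is the histogram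
`B^{(γ)}_{n_i} M_{n_{i-1},n_i} ⋯ B^{(γ)}_{n_1} M_{n_0,n_1} e^{n_0}`, where the action of
`M_{n,n'}` on a histogram supported on `{0, …, n}` is the clipping `cl_{n'}`. -/
def iterBound (γ : ℕ → ℕ → (ℕ →₀ ℕ)) (n : ℕ → ℕ) : ℕ → (ℕ →₀ ℕ)
  | 0 => Finsupp.single (n 0) 1
  | i + 1 => Bop γ (n (i + 1)) (clip (n (i + 1)) (iterBound γ n i))
section TailSumLemmas

lemma tailSum_eq_of_subset (v : ℕ →₀ ℕ) (s : Finset ℕ) (hs : v.support ⊆ s) (J : ℕ) :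
    tailSum v J = ∑ j ∈ s.filter (fun j => J ≤ j), v j := by
  apply Finset.sum_subset (Finset.filter_subset_filter _ hs)
  intro x hx hxn
  rw [Finset.mem_filter] at hx hxn
  by_contra h
  exact hxn ⟨Finsupp.mem_support_iff.mpr h, hx.2⟩

lemma tailSum_eq_Ico (v : ℕ →₀ ℕ) (N J : ℕ) (h : ∀ i, N ≤ i → v i = 0) :
    tailSum v J = ∑ i ∈ Finset.Ico J N, v i := by
  have hs : v.support ⊆ Finset.range N := by
    intro x hx
    rw [Finset.mem_range]
    by_contra hc
    exact Finsupp.mem_support_iff.mp hx (h x (by omega))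
  rw [tailSum_eq_of_subset v _ hs]
  apply Finset.sum_congr _ (fun _ _ => rfl)
  ext x
  simp only [Finset.mem_filter, Finset.mem_range, Finset.mem_Ico]
  omega

lemma tailSum_add (v w : ℕ →₀ ℕ) (J : ℕ) :
    tailSum (v + w) J = tailSum v J + tailSum w J := by
  rw [tailSum_eq_of_subset (v + w) (v.support ∪ w.support)
      (Finsupp.support_add) J,
    tailSum_eq_of_subset v (v.support ∪ w.support) Finset.subset_union_left J,
    tailSum_eq_of_subset w (v.support ∪ w.support) Finset.subset_union_right J,
    ← Finset.sum_add_distrib]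
  exact Finset.sum_congr rfl (fun x _ => Finsupp.add_apply v w x)

lemma tailSum_zero (J : ℕ) : tailSum (0 : ℕ →₀ ℕ) J = 0 := by simp [tailSum]

lemma tailSum_smul (c : ℕ) (v : ℕ →₀ ℕ) (J : ℕ) :
    tailSum (c • v) J = c * tailSum v J := by
  rw [tailSum_eq_of_subset (c • v) v.support (Finsupp.support_smul) J, tailSum,
    Finset.mul_sum]
  exact Finset.sum_congr rfl (fun x _ => rfl)

lemma tailSum_sum {α : Type*} (s : Finset α) (f : α → (ℕ →₀ ℕ)) (J : ℕ) :
    tailSum (∑ j ∈ s, f j) J = ∑ j ∈ s, tailSum (f j) J := by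
  induction s using Finset.cons_induction with
  | empty => simp [tailSum]
  | cons a s ha ih => rw [Finset.sum_cons, tailSum_add, ih, Finset.sum_cons]

lemma tailSum_anti (v : ℕ →₀ ℕ) {J J' : ℕ} (h : J ≤ J') :
    tailSum v J' ≤ tailSum v J := by
  apply Finset.sum_le_sum_of_subset
  intro x hx
  rw [Finset.mem_filter] at hx ⊢
  exact ⟨hx.1, le_trans h hx.2⟩
end TailSumLemmas
section ClipDm

lemma clip_apply (k : ℕ) (v : ℕ →₀ ℕ) (i : ℕ) :
    clip k v i = if i < k then v i else if i = k then tailSum v k else 0 := rfl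

lemma clip_eq_zero_of_gt (k : ℕ) (v : ℕ →₀ ℕ) {i : ℕ} (h : k + 1 ≤ i) :
    clip k v i = 0 := by
  rw [clip_apply, if_neg (by omega), if_neg (by omega)]

lemma tailSum_split (v : ℕ →₀ ℕ) {J k : ℕ} (h : J ≤ k) :
    tailSum v J = (∑ i ∈ Finset.Ico J k, v i) + tailSum v k := by
  have hsub : v.support ⊆ v.support ∪ Finset.range k := Finset.subset_union_left
  rw [tailSum_eq_of_subset v _ hsub J, tailSum_eq_of_subset v _ hsub k]
  rw [← Finset.sum_filter_add_sum_filter_not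
    ((v.support ∪ Finset.range k).filter (fun j => J ≤ j)) (fun j => j < k)]
  congr 1
  · apply Finset.sum_congr _ (fun _ _ => rfl)
    ext x
    simp only [Finset.filter_filter, Finset.mem_filter, Finset.mem_Ico,
      Finset.mem_union, Finset.mem_range]
    constructor
    · rintro ⟨_, h2, h3⟩; exact ⟨h2, h3⟩
    · rintro ⟨h1, h2⟩; exact ⟨Or.inr h2, h1, h2⟩
  · apply Finset.sum_congr _ (fun _ _ => rfl)
    ext x
    simp only [Finset.filter_filter, Finset.mem_filter, Finset.mem_union, Finset.mem_range]
    constructor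
    · rintro ⟨h1, h2, h3⟩; exact ⟨by tauto, by omega⟩
    · rintro ⟨h1, h2⟩; exact ⟨h1, by omega, by omega⟩

lemma tailSum_clip (k : ℕ) (v : ℕ →₀ ℕ) (J : ℕ) :
    tailSum (clip k v) J = if J ≤ k then tailSum v J else 0 := by
  rw [tailSum_eq_Ico (clip k v) (k + 1) J (fun i hi => clip_eq_zero_of_gt k v hi)]
  split
  · rename_i h
    rw [tailSum_split v h, Finset.sum_Ico_succ_top (by omega : J ≤ k)]
    congr 1
    · apply Finset.sum_congr rfl
      intro i hi
      rw [Finset.mem_Ico] at hi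
      rw [clip_apply, if_pos hi.2]
    · rw [clip_apply, if_neg (by omega), if_pos rfl]
  · rename_i h
    rw [Finset.Ico_eq_empty (by omega), Finset.sum_empty]

lemma dm_apply_succ (v : ℕ →₀ ℕ) (i : ℕ) : dm v (i + 1) = v i :=
  Finsupp.embDomain_apply_self _ v i

lemma tailSum_dm (v : ℕ →₀ ℕ) (J : ℕ) : tailSum (dm v) J = tailSum v (J - 1) := by
  rw [tailSum, tailSum, dm, Finsupp.support_embDomain, Finset.filter_map, Finset.sum_map]
  apply Finset.sum_congr
  · apply Finset.filter_congr
    intro x _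
    simp only [Function.comp_apply, Function.Embedding.coeFn_mk]
    constructor <;> (intro; omega)
  · intro x _
    exact Finsupp.embDomain_apply_self _ v x

lemma tailSum_single (m c J : ℕ) :
    tailSum (Finsupp.single m c) J = if J ≤ m then c else 0 := by
  rw [tailSum_eq_Ico (Finsupp.single m c) (m + 1) J
      (fun i hi => Finsupp.single_eq_of_ne (by omega))]
  have : ∀ i ∈ Finset.Ico J (m + 1), (Finsupp.single m c : ℕ →₀ ℕ) i
      = if i = m then c else 0 := by
    intro i _
    rw [Finsupp.single_apply]
    simp [eq_comm]
  rw [Finset.sum_congr rfl this, Finset.sum_ite_eq' (Finset.Ico J (m+1)) m (fun _ => c)]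
  simp only [Finset.mem_Ico]
  split <;> split <;> first | rfl | omega

end ClipDm
section Serra

/-- Tail sum of the Serra histogram. -/
def STail (c m J : ℕ) : ℕ := ∑ i ∈ Finset.Ico (max J (m - c)) (m + 1), Nat.choose m i

lemma gammaSerra_apply (n n' i : ℕ) :
    gammaSerra n n' i = if n' - n ≤ i ∧ i ≤ n' then Nat.choose n' i else 0 := rfl

lemma tailSum_gammaSerra (n n' J : ℕ) : tailSum (gammaSerra n n') J = STail n n' J := by
  rw [tailSum_eq_Ico (gammaSerra n n') (n' + 1) J
      (fun i hi => by rw [gammaSerra_apply, if_neg (by omega)])]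
  rw [STail, ← Finset.sum_subset (Finset.Ico_subset_Ico (le_max_left J (n' - n)) le_rfl)
      (fun x hx hxn => ?_)]
  · apply Finset.sum_congr rfl
    intro i hi
    rw [Finset.mem_Ico] at hi
    rw [gammaSerra_apply, if_pos (by omega)]
  · rw [Finset.mem_Ico] at hx
    rw [Finset.mem_Ico] at hxn
    rw [gammaSerra_apply, if_neg (by omega)]

lemma ST_mono {c d : ℕ} (m J : ℕ) (h : c ≤ d) : STail c m J ≤ STail d m J :=
  Finset.sum_le_sum_of_subset (Finset.Ico_subset_Ico (by omega) le_rfl)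

lemma ST_zero (m J : ℕ) : STail 0 m J = if J ≤ m then 1 else 0 := by
  rw [STail]
  split
  · rename_i h
    rw [max_eq_right (by omega), Nat.sub_zero,
      Finset.sum_Ico_succ_top (le_refl m), Finset.Ico_self, Finset.sum_empty,
      Nat.choose_self]
  · rename_i h
    rw [Finset.Ico_eq_empty (by omega), Finset.sum_empty]

lemma STail_full (k : ℕ) : STail k k 0 = 2 ^ k := by
  rw [STail, Nat.sub_self, max_self, ← Finset.range_eq_Ico, Nat.sum_range_choose]

lemma ST_key (c m J : ℕ) (h1 : 1 ≤ c) (h2 : c ≤ m + 1) :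
    STail (c - 1) m J + STail (min c m) m (J - 1) ≤ STail c (m + 1) J := by
  rcases Nat.eq_zero_or_pos (max J (m + 1 - c)) with hL | hL
  · -- L = 0 : J = 0, c = m + 1, equality with powers of two
    have hJ : J = 0 := by omega
    have hc : c = m + 1 := by omega
    subst hJ hc
    have e1 : m + 1 - 1 = m := by omega
    have e2 : min (m + 1) m = m := by omega
    have e3 : (0 : ℕ) - 1 = 0 := rfl
    rw [e1, e2, e3, STail_full, STail_full, pow_succ]
    omega
  · -- L ≥ 1
    set L := max J (m + 1 - c) with hLdef
    have hpascal : ∀ i ∈ Finset.Ico L (m + 2),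
        Nat.choose (m + 1) i = Nat.choose m (i - 1) + Nat.choose m i := by
      intro i hi
      rw [Finset.mem_Ico] at hi
      obtain ⟨k, rfl⟩ : ∃ k, i = k + 1 := ⟨i - 1, by omega⟩
      simp [Nat.choose_succ_succ]
    have hrhs : STail c (m + 1) J
        = (∑ i ∈ Finset.Ico L (m + 2), Nat.choose m (i - 1))
          + ∑ i ∈ Finset.Ico L (m + 2), Nat.choose m i := by
      rw [STail, show m + 1 - c = m + 1 - c from rfl, ← hLdef]
      rw [Finset.sum_congr rfl hpascal, Finset.sum_add_distrib]
    have hA : (∑ i ∈ Finset.Ico L (m + 2), Nat.choose m (i - 1))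
        = ∑ i ∈ Finset.Ico (L - 1) (m + 1), Nat.choose m i := by
      rw [Finset.sum_Ico_eq_sum_range, Finset.sum_Ico_eq_sum_range]
      rw [show m + 2 - L = m + 1 - (L - 1) by omega]
      apply Finset.sum_congr rfl
      intro k _
      congr 1
      omega
    rw [hrhs, hA]
    have ht1 : STail (c - 1) m J ≤ ∑ i ∈ Finset.Ico L (m + 2), Nat.choose m i := by
      rw [STail]
      apply Finset.sum_le_sum_of_subset
      apply Finset.Ico_subset_Ico (by omega) (by omega)
    have ht2 : STail (min c m) m (J - 1) ≤ ∑ i ∈ Finset.Ico (L - 1) (m + 1), Nat.choose m i := by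
      rw [STail]
      apply Finset.sum_le_sum_of_subset
      apply Finset.Ico_subset_Ico (by omega) (by omega)
    omega

end Serra
section Ours

lemma gammaOne_apply (n' i : ℕ) :
    gammaOne n' i = if i = n' then 1
      else if (n' + 1) / 2 ≤ i ∧ i < n' then 2
      else if i + 1 = (n' + 1) / 2 then n' % 2
      else 0 := rfl

lemma gammaOne_zero_above (n' : ℕ) : ∀ i, n' + 1 ≤ i → gammaOne n' i = 0 := by
  intro i hi
  rw [gammaOne_apply, if_neg (by omega), if_neg (by omega), if_neg (by omega)]

lemma tailSum_gammaOne_total (n' : ℕ) (h : 1 ≤ n') :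
    tailSum (gammaOne n') 0 = n' + 1 := by
  have hh : (n' + 1) / 2 ≤ n' := by omega
  rw [tailSum_eq_Ico (gammaOne n') (n' + 1) 0 (gammaOne_zero_above n')]
  rw [← Finset.sum_Ico_consecutive _ (Nat.zero_le ((n' + 1) / 2)) (by omega : (n' + 1) / 2 ≤ n' + 1)]
  rw [Finset.sum_Ico_succ_top hh]
  have hmid : ∑ i ∈ Finset.Ico ((n' + 1) / 2) n', gammaOne n' i
      = 2 * (n' - (n' + 1) / 2) := by
    rw [Finset.sum_congr rfl (fun i hi => ?_), Finset.sum_const, Nat.card_Ico,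
      smul_eq_mul, Nat.mul_comm]
    rw [Finset.mem_Ico] at hi
    rw [gammaOne_apply, if_neg (by omega), if_pos ⟨hi.1, hi.2⟩]
  have hlow : ∑ i ∈ Finset.Ico 0 ((n' + 1) / 2), gammaOne n' i = n' % 2 := by
    have : ∀ i ∈ Finset.Ico 0 ((n' + 1) / 2), gammaOne n' i
        = if i = (n' + 1) / 2 - 1 then n' % 2 else 0 := by
      intro i hi
      rw [Finset.mem_Ico] at hi
      rw [gammaOne_apply, if_neg (by omega), if_neg (by omega)]
      exact if_congr (by omega) rfl rfl
    rw [Finset.sum_congr rfl this,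
      Finset.sum_ite_eq' (Finset.Ico 0 ((n' + 1) / 2)) ((n' + 1) / 2 - 1) (fun _ => n' % 2),
      if_pos (by rw [Finset.mem_Ico]; omega)]
  have htop : gammaOne n' n' = 1 := by rw [gammaOne_apply, if_pos rfl]
  rw [hmid, hlow, htop]
  omega

lemma gammaOne_le_ST (n' J : ℕ) : tailSum (gammaOne n') J ≤ STail (min 1 n') n' J := by
  rcases Nat.eq_zero_or_pos n' with rfl | hn'
  · -- n' = 0
    rw [tailSum_eq_Ico (gammaOne 0) 1 J (gammaOne_zero_above 0), Nat.min_zero, ST_zero]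
    rcases Nat.eq_zero_or_pos J with rfl | hJ
    · simp [gammaOne_apply]
    · rw [Finset.Ico_eq_empty (by omega), Finset.sum_empty]
      exact Nat.zero_le _
  · rw [min_eq_left hn']
    rcases Nat.lt_or_ge J n' with hJ | hJ
    · -- J ≤ n' - 1 : bound by the total mass
      calc tailSum (gammaOne n') J ≤ tailSum (gammaOne n') 0 := tailSum_anti _ (Nat.zero_le J)
        _ = n' + 1 := tailSum_gammaOne_total n' hn'
        _ ≤ STail 1 n' J := by
            obtain ⟨p, rfl⟩ : ∃ p, n' = p + 1 := ⟨n' - 1, by omega⟩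
            rw [STail, max_eq_right (by omega), show p + 1 - 1 = p by omega,
              Finset.sum_Ico_succ_top (by omega : p ≤ p + 1),
              Finset.sum_Ico_succ_top (by omega : p ≤ p),
              Finset.Ico_self, Finset.sum_empty, Nat.choose_self,
              Nat.choose_succ_self_right]
            omega
    · rcases Nat.eq_or_lt_of_le hJ with rfl | hJ'
      · -- J = n'
        rw [tailSum_eq_Ico (gammaOne n') (n' + 1) n' (gammaOne_zero_above n')]
        rw [Finset.sum_Ico_succ_top (le_refl n'), Finset.Ico_self, Finset.sum_empty,
          gammaOne_apply, if_pos rfl]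
        rw [STail, max_eq_left (by omega), Finset.sum_Ico_succ_top (le_refl n'),
          Finset.Ico_self, Finset.sum_empty, Nat.choose_self]
      · -- J > n'
        rw [tailSum_eq_Ico (gammaOne n') (n' + 1) J (gammaOne_zero_above n'),
          Finset.Ico_eq_empty (by omega), Finset.sum_empty]
        exact Nat.zero_le _

end Ours
section MainInduction

lemma ours_le_ST : ∀ n' n J, tailSum (gammaOursAux n' n) J ≤ STail (min n n') n' J := by
  intro n'
  induction n' with
  | zero =>
    intro n J
    match n with
    | 0 => rw [gammaOursAux.eq_1, tailSum_single, Nat.min_zero, ST_zero]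
    | 1 => rw [gammaOursAux.eq_2]; exact gammaOne_le_ST 0 J
    | (k + 2) =>
      rw [gammaOursAux.eq_3, tailSum_zero]
      exact Nat.zero_le _
  | succ m ih =>
    intro n J
    match n with
    | 0 =>
      rw [gammaOursAux.eq_1, tailSum_single, Nat.zero_min, ST_zero]
      split <;> split <;> omega
    | 1 => rw [gammaOursAux.eq_2]; exact gammaOne_le_ST (m + 1) J
    | (nn + 2) =>
      match m with
      | 0 =>
        rw [show gammaOursAux (0 + 1) (nn + 2) = gammaOne 1 from gammaOursAux.eq_4 nn,
          show (0 : ℕ) + 1 = 1 from rfl, show min (nn + 2) 1 = 1 by omega]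
        have h := gammaOne_le_ST 1 J
        rwa [show min 1 1 = 1 by omega] at h
      | (p + 1) =>
        rw [gammaOursAux.eq_5 (p + 1) nn (fun h => absurd h (Nat.succ_ne_zero p))]
        rw [tailSum_add, tailSum_dm]
        have h1 := ih (min (nn + 1) (p + 1)) J
        have h2 := ih (min (nn + 2) (p + 1)) (J - 1)
        rw [show min (min (nn + 1) (p + 1)) (p + 1) = min (nn + 1) (p + 1) by omega] at h1
        rw [show min (min (nn + 2) (p + 1)) (p + 1) = min (nn + 2) (p + 1) by omega] at h2
        have hkey := ST_key (min (nn + 2) (p + 1 + 1)) (p + 1) J (by omega) (by omega)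
        rw [show min (nn + 2) (p + 1 + 1) - 1 = min (nn + 1) (p + 1) by omega] at hkey
        rw [show min (min (nn + 2) (p + 1 + 1)) (p + 1) = min (nn + 2) (p + 1) by omega] at hkey
        exact le_trans (Nat.add_le_add h1 h2) hkey

lemma ours_le_serra (n n' J : ℕ) :
    tailSum (gammaOurs n n') J ≤ tailSum (gammaSerra n n') J := by
  rw [tailSum_gammaSerra]
  exact le_trans (ours_le_ST n' n J) (ST_mono n' J (min_le_left n n'))

end MainInduction
section Abel

lemma abel_identity (v : ℕ →₀ ℕ) (b : ℕ → ℕ) (hb : Monotone b) (M : ℕ) :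
    ∑ j ∈ Finset.range (M + 1), v j * b j
      = b 0 * (∑ j ∈ Finset.range (M + 1), v j)
        + ∑ k ∈ Finset.range M, (b (k + 1) - b k) * (∑ j ∈ Finset.Ico (k + 1) (M + 1), v j) := by
  induction M with
  | zero => simp [mul_comm]
  | succ M ihM =>
    rw [Finset.sum_range_succ (fun j => v j * b j), ihM, Finset.sum_range_succ v (M + 1),
      Finset.sum_range_succ
        (fun k => (b (k + 1) - b k) * (∑ j ∈ Finset.Ico (k + 1) (M + 1 + 1), v j))]
    have e1 : ∑ k ∈ Finset.range M, (b (k + 1) - b k) * (∑ j ∈ Finset.Ico (k + 1) (M + 1 + 1), v j)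
        = (∑ k ∈ Finset.range M, (b (k + 1) - b k) * (∑ j ∈ Finset.Ico (k + 1) (M + 1), v j))
          + (∑ k ∈ Finset.range M, (b (k + 1) - b k)) * v (M + 1) := by
      rw [Finset.sum_mul, ← Finset.sum_add_distrib]
      apply Finset.sum_congr rfl
      intro k hk
      rw [Finset.mem_range] at hk
      rw [Finset.sum_Ico_succ_top (by omega), Nat.mul_add]
    have e2 : ∑ j ∈ Finset.Ico (M + 1) (M + 1 + 1), v j = v (M + 1) := by
      rw [Finset.sum_Ico_succ_top (le_refl (M + 1)), Finset.Ico_self, Finset.sum_empty,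
        Nat.zero_add]
    have h3 : b 0 + (∑ k ∈ Finset.range M, (b (k + 1) - b k) + (b (M + 1) - b M))
        = b (M + 1) := by
      have h : ∑ k ∈ Finset.range (M + 1), (b (k + 1) - b k) = b (M + 1) - b 0 :=
        Finset.sum_range_tsub hb (M + 1)
      rw [Finset.sum_range_succ] at h
      have := hb (Nat.zero_le (M + 1))
      omega
    rw [e1, e2]
    generalize hd : b (M + 1) - b M = dd at h3 ⊢
    rw [← h3]
    ring

lemma abel_le (v w : ℕ →₀ ℕ) (b : ℕ → ℕ) (hb : Monotone b) (M : ℕ)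
    (hv : ∀ i, M + 1 ≤ i → v i = 0) (hw : ∀ i, M + 1 ≤ i → w i = 0)
    (hle : ∀ J, tailSum v J ≤ tailSum w J) :
    ∑ j ∈ Finset.range (M + 1), v j * b j ≤ ∑ j ∈ Finset.range (M + 1), w j * b j := by
  rw [abel_identity v b hb M, abel_identity w b hb M]
  have hv0 : ∑ j ∈ Finset.range (M + 1), v j = tailSum v 0 := by
    rw [tailSum_eq_Ico v (M + 1) 0 hv, Finset.range_eq_Ico]
  have hw0 : ∑ j ∈ Finset.range (M + 1), w j = tailSum w 0 := by
    rw [tailSum_eq_Ico w (M + 1) 0 hw, Finset.range_eq_Ico]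
  apply Nat.add_le_add
  · rw [hv0, hw0]
    exact Nat.mul_le_mul_left _ (hle 0)
  · apply Finset.sum_le_sum
    intro k _
    rw [← tailSum_eq_Ico v (M + 1) (k + 1) hv, ← tailSum_eq_Ico w (M + 1) (k + 1) hw]
    exact Nat.mul_le_mul_left _ (hle (k + 1))

lemma tailSum_Bop (γ : ℕ → ℕ → (ℕ →₀ ℕ)) (n' : ℕ) (v : ℕ →₀ ℕ) (J : ℕ) :
    tailSum (Bop γ n' v) J
      = ∑ j ∈ Finset.range (n' + 1), v j * tailSum (clip j (γ j n')) J := by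
  rw [Bop, tailSum_sum]
  exact Finset.sum_congr rfl (fun j _ => tailSum_smul (v j) _ J)

lemma Bop_le (n' : ℕ) (v w : ℕ →₀ ℕ)
    (hv : ∀ i, n' + 1 ≤ i → v i = 0) (hw : ∀ i, n' + 1 ≤ i → w i = 0)
    (hle : ∀ J, tailSum v J ≤ tailSum w J) (J : ℕ) :
    tailSum (Bop gammaOurs n' v) J ≤ tailSum (Bop gammaSerra n' w) J := by
  rw [tailSum_Bop, tailSum_Bop]
  have hmono : Monotone (fun j => tailSum (clip j (gammaSerra j n')) J) := by
    apply monotone_nat_of_le_succ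
    intro j
    simp only [tailSum_clip]
    split
    · rw [if_pos (by omega)]
      rw [tailSum_gammaSerra, tailSum_gammaSerra]
      exact ST_mono n' J (by omega)
    · exact Nat.zero_le _
  calc ∑ j ∈ Finset.range (n' + 1), v j * tailSum (clip j (gammaOurs j n')) J
      ≤ ∑ j ∈ Finset.range (n' + 1), v j * tailSum (clip j (gammaSerra j n')) J := by
        apply Finset.sum_le_sum
        intro j _
        apply Nat.mul_le_mul_left
        rw [tailSum_clip, tailSum_clip]
        split
        · exact ours_le_serra j n' J
        · exact le_refl 0
    _ ≤ ∑ j ∈ Finset.range (n' + 1), w j * tailSum (clip j (gammaSerra j n')) J :=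
        abel_le v w _ hmono n' hv hw hle

lemma iter_le (n : ℕ → ℕ) : ∀ i J,
    tailSum (iterBound gammaOurs n i) J ≤ tailSum (iterBound gammaSerra n i) J := by
  intro i
  induction i with
  | zero => exact fun J => le_refl _
  | succ i ih =>
    intro J
    show tailSum (Bop gammaOurs (n (i + 1)) (clip (n (i + 1)) (iterBound gammaOurs n i))) J
      ≤ tailSum (Bop gammaSerra (n (i + 1)) (clip (n (i + 1)) (iterBound gammaSerra n i))) J
    apply Bop_le
    · exact fun k hk => clip_eq_zero_of_gt _ _ hk
    · exact fun k hk => clip_eq_zero_of_gt _ _ hk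
    · intro J'
      rw [tailSum_clip, tailSum_clip]
      split
      · exact ih J'
      · exact le_refl 0

lemma l1_eq_tailSum_zero (v : ℕ →₀ ℕ) : l1 v = tailSum v 0 := by
  rw [l1, tailSum, Finset.filter_true_of_mem (fun x _ => Nat.zero_le x)]

end Abel

/-- the matrix-computation upper bound computed with `γ^{ours}` is at most
the one computed with `γ^{serra}`, for every depth `L ≥ 2` and widths `n_0, …, n_{L-1} ≥ 1`. -/
theorem statement19 (L : ℕ) (hL : 2 ≤ L) (n : ℕ → ℕ) (hn : ∀ i : ℕ, i < L → 1 ≤ n i) :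
    l1 (iterBound gammaOurs n (L - 1)) ≤ l1 (iterBound gammaSerra n (L - 1)) := by
  rw [l1_eq_tailSum_zero, l1_eq_tailSum_zero]
  exact iter_le n (L - 1) 0
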